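/- Let P : [0,∞) → ℝ be continuously differentiable with P(0) = 0, P'(Z) > 0 for all Z ≥ 0, (5/3)P(Z) − Z P'(Z) > 0 for all Z > 0, and p_∞ := lim_{Z→∞} P(Z)/Z^{5/3} > 0, and let a > 0. Define p(ρ,θ) = θ^{5/2} P(ρ θ^{−3/2}) + (a/3)θ⁴ for ρ ≥ 0, θ > 0. Then there exist constants c₁, c₂ > 0 such that c₁·(ρ^{5/3} + θ⁴) ≤ p(ρ,θ) ≤ c₂·(1 + ρ^{5/3} + θ⁴) for all ρ ≥ 0 and θ > 0. -/

import Mathlib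

open Set Filter Topology

/-- Two-sided bound (second line of (ww)) for the full pressure
`p(ρ,θ) = θ^(5/2) P(ρ θ^(-3/2)) + (a/3) θ⁴` under the structural hypotheses (w2)
and the degenerate-regime hypothesis (w3): `p∞ = lim_{Z→∞} P Z / Z^(5/3) > 0`. -/
theorem stmt3 (P : ℝ → ℝ) (a pinf : ℝ)
    (hP : ContDiffOn ℝ 1 P (Set.Ici 0))
    (hP0 : P 0 = 0)
    (hP' : ∀ Z : ℝ, 0 ≤ Z → 0 < derivWithin P (Set.Ici 0) Z)
    (hPZ : ∀ Z : ℝ, 0 < Z → 0 < (5 / 3) * P Z - Z * derivWithin P (Set.Ici 0) Z)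
    (hlim : Tendsto (fun Z : ℝ => P Z / Z ^ ((5 : ℝ) / 3)) atTop (𝓝 pinf))
    (hpinf : 0 < pinf) (ha : 0 < a) :
    ∃ c₁ c₂ : ℝ, 0 < c₁ ∧ 0 < c₂ ∧ ∀ ρ θ : ℝ, 0 ≤ ρ → 0 < θ →
      c₁ * (ρ ^ ((5 : ℝ) / 3) + θ ^ 4) ≤
          θ ^ ((5 : ℝ) / 2) * P (ρ * θ ^ (-(3 : ℝ) / 2)) + a / 3 * θ ^ 4 ∧
      θ ^ ((5 : ℝ) / 2) * P (ρ * θ ^ (-(3 : ℝ) / 2)) + a / 3 * θ ^ 4 ≤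
          c₂ * (1 + ρ ^ ((5 : ℝ) / 3) + θ ^ 4) := by
  have hdiff : DifferentiableOn ℝ P (Ici 0) := hP.differentiableOn one_ne_zero
  have hderiv_eq : ∀ x : ℝ, 0 < x → derivWithin P (Set.Ici 0) x = deriv P x := fun x hx =>
    derivWithin_of_mem_nhds (Ici_mem_nhds hx)
  have hdiffAt : ∀ x : ℝ, 0 < x → DifferentiableAt ℝ P x := fun x hx =>
    hdiff.differentiableAt (Ici_mem_nhds hx)
  set g : ℝ → ℝ := fun Z => P Z / Z ^ ((5 : ℝ) / 3) with hgdef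
  have hgderiv : ∀ x : ℝ, 0 < x → HasDerivAt g
      ((deriv P x * x ^ ((5:ℝ)/3) - P x * (((5:ℝ)/3) * x ^ ((5:ℝ)/3 - 1))) / (x ^ ((5:ℝ)/3))^2) x := by
    intro x hx
    exact ((hdiffAt x hx).hasDerivAt).div (Real.hasDerivAt_rpow_const (Or.inl hx.ne'))
      (by positivity)
  have hgneg : ∀ x ∈ interior (Ioi (0:ℝ)), deriv g x < 0 := by
    intro x hx
    rw [interior_Ioi] at hx
    rw [(hgderiv x hx).deriv]
    apply div_neg_of_neg_of_pos
    · have e1 : x ^ ((5:ℝ)/3 - 1) = x ^ ((2:ℝ)/3) := by norm_num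
      have e2 : x ^ ((5:ℝ)/3) = x ^ ((2:ℝ)/3) * x := by
        rw [show (5:ℝ)/3 = 2/3 + 1 by norm_num, Real.rpow_add_one hx.ne']
      have h23 : (0:ℝ) < x ^ ((2:ℝ)/3) := Real.rpow_pos_of_pos hx _
      have hs := hPZ x hx
      rw [hderiv_eq x hx] at hs
      rw [e1, e2]
      nlinarith [mul_pos h23 hs]
    · have hx' : (0:ℝ) < x := hx
      positivity
  have hcont : ContinuousOn g (Ioi 0) := fun x hx =>
    ((hgderiv x hx).differentiableAt.continuousAt).continuousWithinAt
  have hanti : StrictAntiOn g (Ioi 0) :=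
    strictAntiOn_of_deriv_neg (convex_Ioi 0) hcont hgneg
  have hlow : ∀ Z : ℝ, 0 ≤ Z → pinf * Z ^ ((5:ℝ)/3) ≤ P Z := by
    intro Z hZ
    rcases eq_or_lt_of_le hZ with h | h
    · rw [← h, Real.zero_rpow (by norm_num : ((5:ℝ)/3) ≠ 0), hP0, mul_zero]
    · have hZpow : (0:ℝ) < Z ^ ((5:ℝ)/3) := Real.rpow_pos_of_pos h _
      have hle : pinf ≤ g Z := by
        refine le_of_tendsto hlim ?_
        filter_upwards [eventually_ge_atTop Z] with W hW
        rcases eq_or_lt_of_le hW with h' | h'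
        · rw [← h']
        · exact (hanti h (h.trans h') h').le
      rw [hgdef] at hle
      calc pinf * Z ^ ((5:ℝ)/3) ≤ (P Z / Z ^ ((5:ℝ)/3)) * Z ^ ((5:ℝ)/3) := by
            exact mul_le_mul_of_nonneg_right hle hZpow.le
        _ = P Z := div_mul_cancel₀ _ hZpow.ne'
  have hmono : MonotoneOn P (Ici 0) := by
    apply (strictMonoOn_of_deriv_pos (convex_Ici 0) hP.continuousOn ?_).monotoneOn
    intro x hx
    rw [interior_Ici] at hx
    rw [← hderiv_eq x hx]
    exact hP' x hx.le
  have hP1 : 0 < P 1 := by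
    have := hlow 1 zero_le_one
    rw [Real.one_rpow, mul_one] at this
    linarith
  refine ⟨min pinf (a/3), P 1 + a/3, lt_min hpinf (by linarith), by linarith, ?_⟩
  intro ρ θ hρ hθ
  set Z : ℝ := ρ * θ ^ (-(3:ℝ)/2) with hZdef
  have hZ : 0 ≤ Z := mul_nonneg hρ (Real.rpow_nonneg hθ.le _)
  have hθ52 : (0:ℝ) < θ ^ ((5:ℝ)/2) := Real.rpow_pos_of_pos hθ _
  have key : θ ^ ((5:ℝ)/2) * Z ^ ((5:ℝ)/3) = ρ ^ ((5:ℝ)/3) := by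
    rw [hZdef, Real.mul_rpow hρ (Real.rpow_nonneg hθ.le _)]
    rw [← Real.rpow_mul hθ.le]
    rw [show (-(3:ℝ)/2) * ((5:ℝ)/3) = -((5:ℝ)/2) by norm_num]
    rw [Real.rpow_neg hθ.le]
    field_simp
  have hρ53 : (0:ℝ) ≤ ρ ^ ((5:ℝ)/3) := Real.rpow_nonneg hρ _
  have hθ4 : (0:ℝ) < θ ^ 4 := by positivity
  have hPZnn : 0 ≤ P Z := le_trans (by positivity) (hlow Z hZ)
  constructor
  · -- lower bound
    have h1 : pinf * ρ ^ ((5:ℝ)/3) ≤ θ ^ ((5:ℝ)/2) * P Z := by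
      calc pinf * ρ ^ ((5:ℝ)/3) = θ ^ ((5:ℝ)/2) * (pinf * Z ^ ((5:ℝ)/3)) := by
            rw [← key]; ring
        _ ≤ θ ^ ((5:ℝ)/2) * P Z := mul_le_mul_of_nonneg_left (hlow Z hZ) hθ52.le
    have h2 := min_le_left pinf (a/3)
    have h3 := min_le_right pinf (a/3)
    nlinarith [mul_le_mul_of_nonneg_right h2 hρ53, mul_le_mul_of_nonneg_right h3 hθ4.le]
  · -- upper bound
    by_cases hZ1 : Z ≤ 1
    · have hPZ1 : P Z ≤ P 1 := hmono hZ (by norm_num : (1:ℝ) ∈ Ici (0:ℝ)) hZ1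
      have hθ52le : θ ^ ((5:ℝ)/2) ≤ 1 + θ ^ 4 := by
        rcases le_or_gt θ 1 with h | h
        · have : θ ^ ((5:ℝ)/2) ≤ 1 := Real.rpow_le_one hθ.le h (by norm_num)
          linarith
        · have : θ ^ ((5:ℝ)/2) ≤ θ ^ ((4:ℕ):ℝ) :=
            Real.rpow_le_rpow_of_exponent_le h.le (by norm_num)
          rw [Real.rpow_natCast] at this
          linarith
      have hm : θ ^ ((5:ℝ)/2) * P Z ≤ (1 + θ ^ 4) * P 1 :=
        mul_le_mul hθ52le hPZ1 hPZnn (by positivity)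
      nlinarith
    · push_neg at hZ1
      have hZpos : (0:ℝ) < Z := lt_trans one_pos hZ1
      have hZpow : (0:ℝ) < Z ^ ((5:ℝ)/3) := Real.rpow_pos_of_pos hZpos _
      have hg1 : g Z ≤ g 1 := (hanti (by norm_num) hZpos hZ1).le
      have hgone : g 1 = P 1 := by
        rw [hgdef]; simp
      have hPZle : P Z ≤ P 1 * Z ^ ((5:ℝ)/3) := by
        rw [hgone] at hg1
        rw [hgdef] at hg1
        calc P Z = (P Z / Z ^ ((5:ℝ)/3)) * Z ^ ((5:ℝ)/3) := (div_mul_cancel₀ _ hZpow.ne').symm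
          _ ≤ P 1 * Z ^ ((5:ℝ)/3) := mul_le_mul_of_nonneg_right hg1 hZpow.le
      have hm : θ ^ ((5:ℝ)/2) * P Z ≤ P 1 * ρ ^ ((5:ℝ)/3) := by
        calc θ ^ ((5:ℝ)/2) * P Z ≤ θ ^ ((5:ℝ)/2) * (P 1 * Z ^ ((5:ℝ)/3)) :=
              mul_le_mul_of_nonneg_left hPZle hθ52.le
          _ = P 1 * ρ ^ ((5:ℝ)/3) := by rw [← key]; ring
      nlinarith
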